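/- Let 0 < α₂ < α₁ ≤ 1 and M₁, M₂ > 0, and set F₁ = F_D(α₁, M₁) and F₂ = F_D(α₂, M₂), with Tf = f(0). Then: (i) for every ε > 0, ω(ε, F₁, F₂) = ω(ε, F₂, F₁); (ii) there exist constants 0 < c ≤ C < ∞ and ε₀ > 0 such that c·ε^{2α₁/(2α₁+1)} ≤ ω(ε, F₁, F₂) ≤ C·ε^{2α₁/(2α₁+1)} for all 0 < ε ≤ ε₀; and (iii) for i = 1, 2 there exist constants 0 < c_i ≤ C_i < ∞ and ε₀ > 0 such that c_i·ε^{2α_i/(2α_i+1)} ≤ ω(ε, F_i) ≤ C_i·ε^{2α_i/(2α_i+1)} for all 0 < ε ≤ ε₀. -/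

import Mathlib

open MeasureTheory ProbabilityTheory Real Filter
open scoped ENNReal NNReal RealInnerProductSpace

noncomputable section

/-- The Hilbert space `H = L²([-1/2, 1/2], ℝ)`. -/
abbrev H : Type :=
  MeasureTheory.Lp (α := ℝ) ℝ 2 (volume.restrict (Set.Icc (-(1:ℝ)/2) (1/2)))

/-- The set of increments `T g - T f` over pairs `f ∈ F`, `g ∈ G` with `‖g - f‖₂ ≤ ε`. -/
def modSet (T : H → ℝ) (F G : Set H) (ε : ℝ) : Set ℝ :=
  {d : ℝ | ∃ f ∈ F, ∃ g ∈ G, ‖g - f‖ ≤ ε ∧ d = T g - T f}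

/-- The ordered modulus of continuity `ω(ε, F, G)`. -/
def omegaMod (T : H → ℝ) (F G : Set H) (ε : ℝ) : ℝ := sSup (modSet T F G ε)

/-- The between-class modulus of continuity `ω₊(ε, F, G)`. -/
def omegaPlus (T : H → ℝ) (F G : Set H) (ε : ℝ) : ℝ :=
  max (omegaMod T F G ε) (omegaMod T G F ε)

/-- All the moduli `ω(ε, F, G)` are finite (the defining suprema are over bounded sets). -/
def FiniteModuli (T : H → ℝ) (F G : Set H) : Prop := ∀ ε : ℝ, BddAbove (modSet T F G ε)

/-- `P` is the law of white-noise data with drift `f` at noise level `n`, in sequence form with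
respect to the orthonormal basis `e`: a probability measure on `ℝ^ℕ` whose finite-dimensional
marginals are products of Gaussians `N(⟪f, e i⟫, 1/n)`. -/
def IsWhiteNoiseLaw (e : ℕ → H) (n : ℕ) (f : H) (P : Measure (ℕ → ℝ)) : Prop :=
  IsProbabilityMeasure P ∧
    ∀ s : Finset ℕ,
      P.map (fun y (i : s) => y i) =
        Measure.pi (fun i : s => gaussianReal ⟪f, e i⟫ (n : ℝ≥0)⁻¹)

/-- The mean squared error `E_f (T̂ - Tf)²` of an estimator `T̂` when the target value is `t`,
as an extended real. -/
def risk (P : Measure (ℕ → ℝ)) (That : (ℕ → ℝ) → ℝ) (t : ℝ) : ℝ≥0∞ :=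
  ∫⁻ y, ENNReal.ofReal ((That y - t) ^ 2) ∂P

/-- The affine estimator `y ↦ a₀ + Σᵢ aᵢ yᵢ`. -/
def affineEst (a0 : ℝ) (a : ℕ → ℝ) (y : ℕ → ℝ) : ℝ := a0 + ∑' i, a i * y i

/-- The variance `(Σᵢ aᵢ²)/n` of an affine estimator under the white-noise law at level `n`. -/
def affineVar (n : ℕ) (a : ℕ → ℝ) : ℝ := (∑' i, a i ^ 2) / n

/-- The mean `a₀ + Σᵢ aᵢ ⟪f, eᵢ⟫` of an affine estimator under `P_f`. -/
def affineMean (e : ℕ → H) (a0 : ℝ) (a : ℕ → ℝ) (f : H) : ℝ := a0 + ∑' i, a i * ⟪f, e i⟫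

/-- The Lipschitz/Hölder class `F(α, M)` of functions on `[-1/2, 1/2]`, viewed as a subset of
`L²([-1/2, 1/2])`: elements admitting a representative `g` with
`|g(x) - g(y)| ≤ M|x - y|^α` on `[-1/2, 1/2]`. -/
def holderClass (α M : ℝ) : Set H :=
  {f : H | ∃ g : ℝ → ℝ,
    (∀ x ∈ Set.Icc (-(1:ℝ)/2) (1/2), ∀ y ∈ Set.Icc (-(1:ℝ)/2) (1/2),
      |g x - g y| ≤ M * |x - y| ^ α) ∧
    ∀ᵐ x ∂(volume.restrict (Set.Icc (-(1:ℝ)/2) (1/2))), f x = g x}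

/-- The class `D` of nonincreasing functions on `[-1/2, 1/2]`, viewed as a subset of
`L²([-1/2, 1/2])`. -/
def decreasingClass : Set H :=
  {f : H | ∃ g : ℝ → ℝ, AntitoneOn g (Set.Icc (-(1:ℝ)/2) (1/2)) ∧
    ∀ᵐ x ∂(volume.restrict (Set.Icc (-(1:ℝ)/2) (1/2))), f x = g x}

/-- The class `F_D(α, M) = F(α, M) ∩ D` of decreasing Hölder functions. -/
def FD (α M : ℝ) : Set H := holderClass α M ∩ decreasingClass

namespace Ex1

abbrev I01 : Set ℝ := Set.Icc (-(1:ℝ)/2) (1/2)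
abbrev mu : Measure ℝ := volume.restrict I01

/-- Hölder condition on the interval. -/
def Hold (α M : ℝ) (φ : ℝ → ℝ) : Prop :=
  ∀ x ∈ I01, ∀ y ∈ I01, |φ x - φ y| ≤ M * |x - y| ^ α

instance : IsFiniteMeasure mu := by
  constructor
  rw [Measure.restrict_apply_univ, Real.volume_Icc]
  norm_num

lemma memLp_of_contOn {φ : ℝ → ℝ} (h : ContinuousOn φ I01) : MemLp φ 2 mu := by
  obtain ⟨C, hC⟩ := (isCompact_Icc (a := (-(1:ℝ)/2)) (b := 1/2)).exists_bound_of_continuousOn h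
  apply MemLp.of_bound (h.aestronglyMeasurable measurableSet_Icc) C
  rw [ae_restrict_iff' measurableSet_Icc]
  exact ae_of_all _ fun x hx => hC x hx

/-- build element of H from a continuous-on-I01 function -/
def toH (φ : ℝ → ℝ) (h : ContinuousOn φ I01) : H := (memLp_of_contOn h).toLp φ

lemma toH_ae (φ : ℝ → ℝ) (h : ContinuousOn φ I01) : ∀ᵐ x ∂mu, (toH φ h) x = φ x :=
  (memLp_of_contOn h).coeFn_toLp

lemma norm_sq_eq (u : H) : ‖u‖^2 = ∫ x, (u x)^2 ∂mu := by
  rw [← real_inner_self_eq_norm_sq, MeasureTheory.L2.inner_def]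
  congr 1; ext x; rw [RCLike.inner_apply]; simp [sq]

lemma norm_sub_sq (f g : H) (φ ψ : ℝ → ℝ) (hf : ∀ᵐ x ∂mu, f x = φ x)
    (hg : ∀ᵐ x ∂mu, g x = ψ x) : ‖g - f‖^2 = ∫ x, (ψ x - φ x)^2 ∂mu := by
  rw [norm_sq_eq]
  apply integral_congr_ae
  filter_upwards [MeasureTheory.Lp.coeFn_sub g f, hf, hg] with x h1 h2 h3
  rw [h1, Pi.sub_apply, h2, h3]

lemma contOn_of_holder {α M : ℝ} {φ : ℝ → ℝ} (hα : 0 < α)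
    (hφ : ∀ x ∈ I01, ∀ y ∈ I01, |φ x - φ y| ≤ M * |x - y| ^ α) :
    ContinuousOn φ I01 := by
  intro x hx
  rw [Metric.continuousWithinAt_iff]
  intro ε hε
  set M' : ℝ := max M 1 with hM'
  have hM'pos : 0 < M' := lt_of_lt_of_le one_pos (le_max_right _ _)
  refine ⟨(ε / (2 * M')) ^ (1/α), Real.rpow_pos_of_pos (by positivity) _, fun y hy hd => ?_⟩
  have h1 : |φ y - φ x| ≤ M * |y - x| ^ α := hφ y hy x hx
  have h2 : |y - x| ^ α ≤ ((ε / (2 * M')) ^ (1/α)) ^ α := by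
    apply Real.rpow_le_rpow (abs_nonneg _) _ hα.le
    rw [Real.dist_eq] at hd; exact hd.le
  have h3 : ((ε / (2 * M')) ^ (1/α : ℝ)) ^ α = ε / (2 * M') := by
    rw [← Real.rpow_mul (by positivity), one_div, inv_mul_cancel₀ hα.ne', Real.rpow_one]
  rw [Real.dist_eq]
  calc |φ y - φ x| ≤ M * |y - x| ^ α := h1
    _ ≤ M' * (ε / (2 * M')) := by
        rw [← h3]
        apply mul_le_mul (le_max_left _ _) h2 (by positivity) hM'pos.le
    _ = ε / 2 := by field_simp
    _ < ε := by linarith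

lemma antitoneOn_of_ae_eq {α M : ℝ} {φ ψ : ℝ → ℝ} (hα : 0 < α)
    (hφ : Hold α M φ) (hψ : AntitoneOn ψ I01)
    (hae : ∀ᵐ x ∂mu, φ x = ψ x) : AntitoneOn φ I01 := by
  have hae' : ∀ᵐ z ∂(volume : Measure ℝ), z ∈ I01 → φ z = ψ z := by
    rwa [ae_restrict_iff' measurableSet_Icc] at hae
  have hnull : volume {z : ℝ | ¬ (z ∈ I01 → φ z = ψ z)} = 0 := ae_iff.mp hae'
  have exists_eq : ∀ a b : ℝ, a < b → Set.Ioo a b ⊆ I01 →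
      ∃ u ∈ Set.Ioo a b, φ u = ψ u := by
    intro a b hab hsub
    by_contra hne
    push_neg at hne
    have hsub2 : Set.Ioo a b ⊆ {z : ℝ | ¬ (z ∈ I01 → φ z = ψ z)} := by
      intro u hu
      simp only [Set.mem_setOf_eq, Classical.not_imp]
      exact ⟨hsub hu, hne u hu⟩
    have h0 := measure_mono_null hsub2 hnull
    rw [Real.volume_Ioo] at h0
    rw [ENNReal.ofReal_eq_zero] at h0
    linarith
  intro x hx y hy hxy
  rcases eq_or_lt_of_le hxy with rfl | hxy
  · exact le_refl _
  have key : ∀ η : ℝ, 0 < η → φ y ≤ φ x + η := by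
    intro η hη
    set M' : ℝ := max M 1 with hM'def
    have hM' : 0 < M' := lt_of_lt_of_le one_pos (le_max_right _ _)
    set r : ℝ := min ((y - x)/2) ((η/(2*M')) ^ (1/α)) with hrdef
    have hrpos : 0 < r := lt_min (by linarith) (Real.rpow_pos_of_pos (by positivity) _)
    have hr1 : r ≤ (y-x)/2 := min_le_left _ _
    have holder_bound : ∀ u v : ℝ, u ∈ I01 → v ∈ I01 → |u - v| ≤ r → |φ u - φ v| ≤ η/2 := by
      intro u v hu hv huv
      calc |φ u - φ v| ≤ M * |u - v| ^ α := hφ u hu v hv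
        _ ≤ M' * ((η/(2*M')) ^ (1/α)) ^ α := by
            apply mul_le_mul (le_max_left _ _) _ (Real.rpow_nonneg (abs_nonneg _) _) hM'.le
            exact Real.rpow_le_rpow (abs_nonneg _) (le_trans huv (min_le_right _ _)) hα.le
        _ = η/2 := by
            rw [← Real.rpow_mul (by positivity), one_div, inv_mul_cancel₀ hα.ne', Real.rpow_one]
            field_simp
    have hx1 : -(1:ℝ)/2 ≤ x := hx.1
    have hy2 : y ≤ 1/2 := hy.2
    obtain ⟨u, hu, hueq⟩ := exists_eq x (x + r) (by linarith)
      (fun z hz => Set.mem_Icc.2 ⟨by linarith [hz.1], by linarith [hz.2]⟩)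
    obtain ⟨v, hv, hveq⟩ := exists_eq (y - r) y (by linarith)
      (fun z hz => Set.mem_Icc.2 ⟨by linarith [hz.1], by linarith [hz.2]⟩)
    have huI : u ∈ I01 := Set.mem_Icc.2 ⟨by linarith [hu.1], by linarith [hu.2]⟩
    have hvI : v ∈ I01 := Set.mem_Icc.2 ⟨by linarith [hv.1], by linarith [hv.2]⟩
    have huv : u ≤ v := by linarith [hu.2, hv.1]
    have b1 : |φ y - φ v| ≤ η/2 := holder_bound y v hy hvI (by
      rw [abs_of_nonneg (by linarith [hv.2])]; linarith [hv.1])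
    have b2 : |φ u - φ x| ≤ η/2 := holder_bound u x huI hx (by
      rw [abs_of_nonneg (by linarith [hu.1])]; linarith [hu.2])
    have b3 : ψ v ≤ ψ u := hψ huI hvI huv
    have e1 : φ y ≤ φ v + η/2 := by have := abs_le.1 b1; linarith [this.2]
    have e2 : φ u ≤ φ x + η/2 := by have := abs_le.1 b2; linarith [(abs_le.1 b2).2]
    calc φ y ≤ φ v + η/2 := e1
      _ = ψ v + η/2 := by rw [hveq]
      _ ≤ ψ u + η/2 := by linarith
      _ = φ u + η/2 := by rw [hueq]
      _ ≤ φ x + η := by linarith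
  exact le_of_forall_pos_le_add key
lemma rpow_subadd {a b p : ℝ} (ha : 0 ≤ a) (hb : 0 ≤ b) (hp : 0 ≤ p) (hp1 : p ≤ 1) :
    (a + b) ^ p ≤ a ^ p + b ^ p := by
  have h := NNReal.coe_le_coe.2 (NNReal.rpow_add_le_add_rpow a.toNNReal b.toNNReal hp hp1)
  push_cast [Real.coe_toNNReal a ha, Real.coe_toNNReal b hb] at h
  exact h

lemma rpow_abs_sub {a b p : ℝ} (ha : 0 ≤ a) (hb : 0 ≤ b) (hp : 0 ≤ p) (hp1 : p ≤ 1) :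
    |a ^ p - b ^ p| ≤ |a - b| ^ p := by
  wlog hab : b ≤ a generalizing a b
  · rw [abs_sub_comm, abs_sub_comm a b]; exact this hb ha (le_of_not_ge hab)
  have key : (a - b + b) ^ p ≤ (a - b) ^ p + b ^ p := rpow_subadd (by linarith) hb hp hp1
  rw [sub_add_cancel] at key
  rw [abs_of_nonneg (by linarith : (0:ℝ) ≤ a - b)]
  rw [abs_of_nonneg (sub_nonneg.2 (Real.rpow_le_rpow hb hab hp))]
  linarith

/-- The basic decreasing bump profile. -/
def Kf (α m δ t : ℝ) (x : ℝ) : ℝ := δ - m * (min (max x 0) t) ^ α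


section Kprops
variable {α m δ t x : ℝ}

lemma t_pos (hα : 0 < α) (hm : 0 < m) (hδ : 0 < δ) (ht : t = (δ/m) ^ (1/α)) : 0 < t :=
  ht ▸ Real.rpow_pos_of_pos (by positivity) _

lemma mt_eq (hα : 0 < α) (hm : 0 < m) (hδ : 0 < δ) (ht : t = (δ/m) ^ (1/α)) :
    m * t ^ α = δ := by
  rw [ht, ← Real.rpow_mul (by positivity), one_div, inv_mul_cancel₀ hα.ne', Real.rpow_one]
  field_simp

lemma Kf_hold (hα : 0 < α) (hα1 : α ≤ 1) (hm : 0 < m) (htpos : 0 < t) :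
    ∀ x y : ℝ, |Kf α m δ t x - Kf α m δ t y| ≤ m * |x - y| ^ α := by
  intro x y
  have hclip : ∀ z : ℝ, 0 ≤ min (max z 0) t := fun z =>
    le_min (le_max_right _ _) htpos.le
  have lip : |min (max x 0) t - min (max y 0) t| ≤ |x - y| := by
    calc |min (max x 0) t - min (max y 0) t| ≤ max |max x 0 - max y 0| |t - t| :=
          abs_min_sub_min_le_max _ _ _ _
      _ = |max x 0 - max y 0| := by simp
      _ ≤ |x - y| := abs_max_sub_max_le_abs _ _ _
  have heq : |Kf α m δ t x - Kf α m δ t y|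
      = m * |(min (max x 0) t) ^ α - (min (max y 0) t) ^ α| := by
    rw [Kf, Kf]
    rw [show δ - m * (min (max x 0) t) ^ α - (δ - m * (min (max y 0) t) ^ α)
      = -(m * ((min (max x 0) t) ^ α - (min (max y 0) t) ^ α)) by ring]
    rw [abs_neg, abs_mul, abs_of_nonneg hm.le]
  rw [heq]
  apply mul_le_mul_of_nonneg_left _ hm.le
  calc |(min (max x 0) t) ^ α - (min (max y 0) t) ^ α|
      ≤ |min (max x 0) t - min (max y 0) t| ^ α := rpow_abs_sub (hclip x) (hclip y) hα.le hα1
    _ ≤ |x - y| ^ α := Real.rpow_le_rpow (abs_nonneg _) lip hα.le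

lemma Kf_anti (hα : 0 < α) (hm : 0 < m) (htpos : 0 < t) : Antitone (Kf α m δ t) := by
  intro x y hxy
  have h1 : min (max x 0) t ≤ min (max y 0) t :=
    min_le_min (max_le_max hxy le_rfl) le_rfl
  have h2 : (min (max x 0) t) ^ α ≤ (min (max y 0) t) ^ α :=
    Real.rpow_le_rpow (le_min (le_max_right _ _) htpos.le) h1 hα.le
  simp only [Kf]
  nlinarith

lemma Kf_of_nonpos (hα : 0 < α) (htpos : 0 < t) (hx : x ≤ 0) : Kf α m δ t x = δ := by
  rw [Kf, max_eq_right hx, min_eq_left htpos.le, Real.zero_rpow hα.ne']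
  ring

lemma Kf_of_ge (hδm : m * t ^ α = δ) (htpos : 0 < t) (hx : t ≤ x) : Kf α m δ t x = 0 := by
  rw [Kf, max_eq_left (le_trans htpos.le hx), min_eq_right hx, hδm]
  ring

lemma Kf_le (hα : 0 < α) (hm : 0 < m) (htpos : 0 < t) : Kf α m δ t x ≤ δ := by
  rw [Kf]
  have : 0 ≤ (min (max x 0) t) ^ α :=
    Real.rpow_nonneg (le_min (le_max_right _ _) htpos.le) _
  nlinarith

lemma Kf_nonneg (hα : 0 < α) (hm : 0 < m) (hδm : m * t ^ α = δ) (htpos : 0 < t) :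
    0 ≤ Kf α m δ t x := by
  rw [Kf, ← hδm]
  have h1 : min (max x 0) t ≤ t := min_le_right _ _
  have h2 : (min (max x 0) t) ^ α ≤ t ^ α :=
    Real.rpow_le_rpow (le_min (le_max_right _ _) htpos.le) h1 hα.le
  nlinarith

lemma Kf_zero (hα : 0 < α) (htpos : 0 < t) : Kf α m δ t 0 = δ :=
  Kf_of_nonpos hα htpos le_rfl

end Kprops
lemma key_upper {α M ε : ℝ} (hα : 0 < α) (hα1 : α ≤ 1) (hM : 0 < M) (hε : 0 < ε)
    (f g : H) (φ ψ : ℝ → ℝ)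
    (hφH : Hold α M φ) (hφae : ∀ᵐ x ∂mu, f x = φ x)
    (hψA : AntitoneOn ψ I01) (hψC : ContinuousOn ψ I01) (hψae : ∀ᵐ x ∂mu, g x = ψ x)
    (hnorm : ‖g - f‖ ≤ ε) :
    ψ 0 - φ 0 ≤ (4 * (2*M)^(1/α)) ^ (α/(2*α+1)) * ε ^ (2*α/(2*α+1)) ∨
      ψ 0 - φ 0 ≤ 3 * ε := by
  set δ := ψ 0 - φ 0 with hδdef
  rcases le_or_gt δ 0 with hδ | hδ
  · left
    have : (0:ℝ) ≤ (4 * (2*M)^(1/α)) ^ (α/(2*α+1)) * ε ^ (2*α/(2*α+1)) := by positivity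
    linarith
  set t : ℝ := (δ/(2*M)) ^ (1/α) with htdef
  have htpos : 0 < t := Real.rpow_pos_of_pos (by positivity) _
  have hMt : M * t ^ α = δ/2 := by
    rw [htdef, ← Real.rpow_mul (by positivity), one_div, inv_mul_cancel₀ hα.ne',
      Real.rpow_one]
    field_simp
  set s : ℝ := min t (1/2) with hsdef
  have hs : 0 < s := lt_min htpos (by norm_num)
  have hs2 : s ≤ 1/2 := min_le_right _ _
  have hst : s ≤ t := min_le_left _ _
  have h0I : (0:ℝ) ∈ I01 := Set.mem_Icc.2 ⟨by norm_num, by norm_num⟩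
  have hSsub : Set.Icc (-s) 0 ⊆ I01 := fun z hz =>
    Set.mem_Icc.2 ⟨by have := hz.1; linarith, by have := hz.2; linarith⟩
  have hptw : ∀ x ∈ Set.Icc (-s) 0, (δ/2)^2 ≤ (ψ x - φ x)^2 := by
    intro x hx
    have hxI : x ∈ I01 := hSsub hx
    have h1 : ψ 0 ≤ ψ x := hψA hxI h0I hx.2
    have h2 : |φ x - φ 0| ≤ M * |x - 0| ^ α := hφH x hxI 0 h0I
    have h3 : |x - 0| ≤ s := by
      rw [sub_zero, abs_le]; exact ⟨hx.1, le_trans hx.2 hs.le⟩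
    have h4 : M * |x - 0| ^ α ≤ δ/2 := by
      rw [← hMt]
      exact mul_le_mul_of_nonneg_left
        (Real.rpow_le_rpow (abs_nonneg _) (le_trans h3 hst) hα.le) hM.le
    have h5 : δ/2 ≤ ψ x - φ x := by
      have h6 := (abs_le.1 (h2.trans h4)).2
      simp only [hδdef] at *
      linarith
    nlinarith
  have hφC : ContinuousOn φ I01 := contOn_of_holder hα hφH
  have hint : Integrable (fun x => (ψ x - φ x)^2) mu := by
    have : ContinuousOn (fun x => (ψ x - φ x)^2) I01 := (hψC.sub hφC).pow 2
    exact this.integrableOn_Icc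
  have hlow : (δ/2)^2 * s ≤ ∫ x, (ψ x - φ x)^2 ∂mu := by
    have hres : mu.restrict (Set.Icc (-s) 0) = volume.restrict (Set.Icc (-s) 0) := by
      rw [Measure.restrict_restrict measurableSet_Icc,
        Set.inter_eq_self_of_subset_left hSsub]
    calc (δ/2)^2 * s = ∫ _x in Set.Icc (-s) 0, (δ/2)^2 ∂volume := by
          rw [setIntegral_const, smul_eq_mul, measureReal_def, Real.volume_Icc,
            ENNReal.toReal_ofReal (by linarith)]
          ring
      _ ≤ ∫ x in Set.Icc (-s) 0, (ψ x - φ x)^2 ∂volume := by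
          have hconst : IntegrableOn (fun _ : ℝ => (δ/2)^2) (Set.Icc (-s) 0) volume := by
            exact integrableOn_const (by rw [Real.volume_Icc]; exact ENNReal.ofReal_ne_top)
          have hsq0 : IntegrableOn (fun x => (ψ x - φ x)^2) I01 volume := hint
          exact setIntegral_mono_on hconst (hsq0.mono_set hSsub) measurableSet_Icc hptw
      _ = ∫ x in Set.Icc (-s) 0, (ψ x - φ x)^2 ∂mu := by rw [hres]
      _ ≤ ∫ x, (ψ x - φ x)^2 ∂mu :=
          setIntegral_le_integral hint (ae_of_all _ fun x => sq_nonneg _)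
  have hnorm2 : ∫ x, (ψ x - φ x)^2 ∂mu ≤ ε^2 := by
    rw [← norm_sub_sq f g φ ψ hφae hψae]
    exact pow_le_pow_left₀ (norm_nonneg _) hnorm 2
  rcases le_or_gt t (1/2) with hcase | hcase
  · left
    have hseq : s = t := min_eq_left hcase
    have h1 : (δ/2)^2 * t ≤ ε^2 := by rw [← hseq]; linarith
    set A : ℝ := 4 * (2*M)^(1/α) with hAdef
    have hA : 0 < A := by positivity
    have e1 : (δ/2)^2 * t = δ ^ ((2:ℝ) + 1/α) / A := by
      have hne : ((2*M:ℝ)) ^ ((1:ℝ)/α) ≠ 0 :=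
        (Real.rpow_pos_of_pos (by positivity) _).ne'
      rw [Real.rpow_add hδ, Real.rpow_two, htdef, hAdef,
        Real.div_rpow hδ.le (by positivity)]
      field_simp
      ring
    have e2 : δ ^ ((2:ℝ) + 1/α) ≤ A * ε^2 := by
      rw [e1] at h1
      calc δ ^ ((2:ℝ) + 1/α) = (δ ^ ((2:ℝ) + 1/α) / A) * A := by field_simp
        _ ≤ ε^2 * A := mul_le_mul_of_nonneg_right h1 hA.le
        _ = A * ε^2 := by ring
    have e3 : δ = (δ ^ ((2:ℝ) + 1/α)) ^ (α/(2*α+1)) := by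
      rw [← Real.rpow_mul hδ.le,
        show ((2:ℝ) + 1/α) * (α/(2*α+1)) = 1 by field_simp, Real.rpow_one]
    calc δ = (δ ^ ((2:ℝ) + 1/α)) ^ (α/(2*α+1)) := e3
      _ ≤ (A * ε^2) ^ (α/(2*α+1)) :=
          Real.rpow_le_rpow (Real.rpow_nonneg hδ.le _) e2 (by positivity)
      _ = A ^ (α/(2*α+1)) * ε ^ (2*α/(2*α+1)) := by
          rw [Real.mul_rpow hA.le (sq_nonneg _), ← Real.rpow_two, ← Real.rpow_mul hε.le,
            show (2:ℝ) * (α/(2*α+1)) = 2*α/(2*α+1) by ring]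
  · right
    have hseq : s = 1/2 := min_eq_right hcase.le
    have h1 : (δ/2)^2 * (1/2) ≤ ε^2 := by rw [← hseq]; linarith
    nlinarith
lemma hold_mono {α α' M M' : ℝ} {φ : ℝ → ℝ} (hα' : 0 < α') (h'le : α' ≤ α)
    (hMM : M ≤ M') (hM : 0 ≤ M) (hφ : Hold α M φ) : Hold α' M' φ := by
  intro x hx y hy
  refine (hφ x hx y hy).trans ?_
  have hd1 : |x - y| ≤ 1 := by
    have h1 := hx.1; have h2 := hx.2; have h3 := hy.1; have h4 := hy.2
    rw [abs_le]
    constructor <;> linarith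
  rcases eq_or_lt_of_le (abs_nonneg (x - y)) with h0 | h0
  · rw [← h0, Real.zero_rpow (ne_of_gt (lt_of_lt_of_le hα' h'le)),
      Real.zero_rpow hα'.ne']
    simp
  · exact mul_le_mul hMM (Real.rpow_le_rpow_of_exponent_ge h0 hd1 h'le)
      (Real.rpow_nonneg (abs_nonneg _) _) (hM.trans hMM)

lemma key_lower {αa αb Ma Mb : ℝ} (hb : 0 < αb) (hba : αb ≤ αa) (ha1 : αa ≤ 1)
    (hMa : 0 < Ma) (hMb : 0 < Mb) (T : H → ℝ)
    (hT : ∀ (f : H) (g : ℝ → ℝ), ContinuousOn g (Set.Icc (-(1:ℝ)/2) (1/2)) →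
      (∀ᵐ x ∂(volume.restrict (Set.Icc (-(1:ℝ)/2) (1/2))), f x = g x) → T f = g 0) :
    ∃ c ε₀ : ℝ, 0 < c ∧ 0 < ε₀ ∧ ∀ ε : ℝ, 0 < ε → ε ≤ ε₀ →
      c * ε ^ (2*αa/(2*αa+1)) ∈ modSet T (FD αa Ma) (FD αb Mb) ε := by
  have ha : 0 < αa := lt_of_lt_of_le hb hba
  set m : ℝ := min Ma Mb with hmdef
  have hm : 0 < m := lt_min hMa hMb
  set q : ℝ := 2*αa/(2*αa+1) with hqdef
  have hq : 0 < q := by positivity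
  set c : ℝ := (m^(1/αa)/2) ^ (αa/(2*αa+1)) with hcdef
  have hc : 0 < c := Real.rpow_pos_of_pos (by positivity) _
  set X : ℝ := m * (2:ℝ)^(-αa) / c with hXdef
  have hX : 0 < X := by positivity
  set ε₀ : ℝ := X ^ ((2*αa+1)/(2*αa)) with hε₀def
  have hε₀ : 0 < ε₀ := Real.rpow_pos_of_pos hX _
  refine ⟨c, ε₀, hc, hε₀, fun ε hε hεle => ?_⟩
  set δ : ℝ := c * ε ^ q with hδdef
  have hδ : 0 < δ := by positivity
  -- δ ≤ m * 2^(-αa)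
  have hδle : δ ≤ m * (2:ℝ)^(-αa) := by
    have h1 : ε ^ q ≤ ε₀ ^ q := Real.rpow_le_rpow hε.le hεle hq.le
    have h2 : ε₀ ^ q = X := by
      rw [hε₀def, ← Real.rpow_mul hX.le, hqdef,
        show (2*αa+1)/(2*αa) * (2*αa/(2*αa+1)) = 1 by field_simp, Real.rpow_one]
    calc δ = c * ε ^ q := rfl
      _ ≤ c * X := by rw [← h2]; exact mul_le_mul_of_nonneg_left h1 hc.le
      _ = m * (2:ℝ)^(-αa) := by rw [hXdef]; field_simp
  set t : ℝ := (δ/m) ^ (1/αa) with htdef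
  have htpos : 0 < t := Real.rpow_pos_of_pos (by positivity) _
  have hmt : m * t ^ αa = δ := mt_eq ha hm hδ htdef
  have ht2 : t ≤ 1/2 := by
    have h1 : δ/m ≤ (2:ℝ)^(-αa) := by
      rw [div_le_iff₀ hm]
      calc δ ≤ m * (2:ℝ)^(-αa) := hδle
        _ = (2:ℝ)^(-αa) * m := by ring
    calc t = (δ/m) ^ (1/αa) := htdef
      _ ≤ ((2:ℝ)^(-αa)) ^ (1/αa) :=
          Real.rpow_le_rpow (by positivity) h1 (by positivity)
      _ = 1/2 := by
          rw [← Real.rpow_mul (by norm_num), mul_one_div, neg_div,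
            div_self ha.ne', Real.rpow_neg_one]
          norm_num
  -- the two functions
  have gHold : Hold αa m (Kf αa m δ t) := fun x _ y _ => Kf_hold ha ha1 hm htpos x y
  have fHold : Hold αa m (fun x => Kf αa m δ t (x + t)) := by
    intro x _ y _
    have := Kf_hold (δ := δ) ha ha1 hm htpos (x + t) (y + t)
    simpa using this
  have gCont : ContinuousOn (Kf αa m δ t) I01 := contOn_of_holder ha gHold
  have fCont : ContinuousOn (fun x => Kf αa m δ t (x + t)) I01 := contOn_of_holder ha fHold
  set g : H := toH _ gCont with hgdef
  set f : H := toH _ fCont with hfdef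
  have hmMa : m ≤ Ma := min_le_left _ _
  have hmMb : m ≤ Mb := min_le_right _ _
  have hfFD : f ∈ FD αa Ma :=
    ⟨⟨_, hold_mono ha le_rfl hmMa hm.le fHold, toH_ae _ fCont⟩,
     ⟨_, ((Kf_anti ha hm htpos).comp_monotone (fun x y h => by simpa using h : Monotone
        (fun x : ℝ => x + t))).antitoneOn _, toH_ae _ fCont⟩⟩
  have hgFD : g ∈ FD αb Mb :=
    ⟨⟨_, hold_mono hb hba hmMb hm.le gHold, toH_ae _ gCont⟩,
     ⟨_, (Kf_anti ha hm htpos).antitoneOn _, toH_ae _ gCont⟩⟩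
  -- norm bound
  have hnormsq : ‖g - f‖^2 ≤ ε^2 := by
    rw [norm_sub_sq f g _ _ (toH_ae _ fCont) (toH_ae _ gCont)]
    have hptw : ∀ x : ℝ, (Kf αa m δ t x - Kf αa m δ t (x + t))^2 ≤
        Set.indicator (Set.Icc (-t) t) (fun _ => δ^2) x := by
      intro x
      by_cases hx : x ∈ Set.Icc (-t) t
      · rw [Set.indicator_of_mem hx]
        have h1 : Kf αa m δ t (x + t) ≤ Kf αa m δ t x :=
          Kf_anti ha hm htpos (by linarith)
        have h2 : Kf αa m δ t x ≤ δ := Kf_le ha hm htpos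
        have h3 : 0 ≤ Kf αa m δ t (x + t) := Kf_nonneg ha hm hmt htpos
        nlinarith
      · rw [Set.indicator_of_notMem hx]
        rw [Set.mem_Icc, not_and_or, not_le, not_le] at hx
        rcases hx with hx | hx
        · rw [Kf_of_nonpos ha htpos (by linarith), Kf_of_nonpos ha htpos (by linarith)]
          norm_num
        · rw [Kf_of_ge hmt htpos (by linarith), Kf_of_ge hmt htpos (by linarith)]
          norm_num
    have hint : Integrable (fun x => (Kf αa m δ t x - Kf αa m δ t (x + t))^2) mu :=
      ((gCont.sub fCont).pow 2).integrableOn_Icc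
    have hind : Integrable (Set.indicator (Set.Icc (-t) t) (fun _ => δ^2)) mu :=
      (integrable_const _).indicator measurableSet_Icc
    have hbound : ∫ x, (Kf αa m δ t x - Kf αa m δ t (x + t))^2 ∂mu ≤ δ^2 * (2*t) := by
      calc ∫ x, (Kf αa m δ t x - Kf αa m δ t (x + t))^2 ∂mu
          ≤ ∫ x, Set.indicator (Set.Icc (-t) t) (fun _ => δ^2) x ∂mu :=
            integral_mono hint hind hptw
        _ = (mu (Set.Icc (-t) t)).toReal • δ^2 := integral_indicator_const _ measurableSet_Icc
        _ ≤ δ^2 * (2*t) := by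
            rw [smul_eq_mul, mul_comm]
            apply mul_le_mul_of_nonneg_left _ (sq_nonneg δ)
            have h1 : mu (Set.Icc (-t) t) ≤ ENNReal.ofReal (2*t) := by
              calc mu (Set.Icc (-t) t) ≤ volume (Set.Icc (-t) t) :=
                    Measure.restrict_apply_le _ _
                _ = ENNReal.ofReal (2*t) := by rw [Real.volume_Icc]; ring_nf
            calc (mu (Set.Icc (-t) t)).toReal ≤ (ENNReal.ofReal (2*t)).toReal :=
                  ENNReal.toReal_mono ENNReal.ofReal_ne_top h1
              _ = 2*t := ENNReal.toReal_ofReal (by linarith)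
    -- δ^2 * (2*t) = ε^2
    have hkey : δ^2 * (2*t) = ε^2 := by
      have hmr : (0:ℝ) < m ^ ((1:ℝ)/αa) := Real.rpow_pos_of_pos hm _
      have hqp : q * ((2:ℝ) + 1/αa) = 2 := by rw [hqdef]; field_simp
      have hcp : c ^ ((2:ℝ) + 1/αa) = m ^ ((1:ℝ)/αa) / 2 := by
        rw [hcdef, ← Real.rpow_mul (by positivity),
          show (αa/(2*αa+1)) * ((2:ℝ) + 1/αa) = 1 by field_simp, Real.rpow_one]
      have hδp : δ ^ ((2:ℝ) + 1/αa) = (m ^ ((1:ℝ)/αa) / 2) * ε ^ (2:ℝ) := by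
        rw [hδdef, Real.mul_rpow hc.le (Real.rpow_nonneg hε.le _), hcp,
          ← Real.rpow_mul hε.le, hqp]
      have e1 : δ^2 * (2*t) = δ ^ ((2:ℝ) + 1/αa) * (2 / m^((1:ℝ)/αa)) := by
        rw [htdef, Real.div_rpow hδ.le hm.le, Real.rpow_add hδ, Real.rpow_two]
        field_simp
      rw [e1, hδp, Real.rpow_two]
      field_simp
    calc ∫ x, (Kf αa m δ t x - Kf αa m δ t (x + t))^2 ∂mu ≤ δ^2 * (2*t) := hbound
      _ = ε^2 := hkey
  have hnorm : ‖g - f‖ ≤ ε := by nlinarith [norm_nonneg (g - f)]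
  -- values
  have hTg : T g = δ := by
    rw [hT g _ gCont (toH_ae _ gCont), Kf_of_nonpos ha htpos le_rfl]
  have hTf : T f = 0 := by
    rw [hT f _ fCont (toH_ae _ fCont)]
    show Kf αa m δ t (0 + t) = 0
    rw [zero_add, Kf_of_ge hmt htpos le_rfl]
  exact ⟨f, hfFD, g, hgFD, hnorm, by rw [hTg, hTf, hδdef]; ring⟩
lemma neg_preimage_I : Neg.neg ⁻¹' I01 = I01 := by
  ext x
  simp only [Set.mem_preimage, Set.mem_Icc]
  constructor <;> intro h <;> constructor <;> linarith [h.1, h.2]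

lemma integral_reflect (u : ℝ → ℝ) : ∫ x, u (-x) ∂mu = ∫ y, u y ∂mu := by
  have h := (Measure.measurePreserving_neg (volume : Measure ℝ)).setIntegral_preimage_emb
    (MeasurableEquiv.neg ℝ).measurableEmbedding u I01
  rw [neg_preimage_I] at h
  exact h

lemma neg_mem_I {x : ℝ} (hx : x ∈ I01) : -x ∈ I01 :=
  Set.mem_Icc.2 ⟨by linarith [hx.2], by linarith [hx.1]⟩

/-- Elimination for FD: a common representative that is Hölder, antitone, continuous. -/
lemma FD_elim {α M : ℝ} {f : H} (hα : 0 < α) (hf : f ∈ FD α M) :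
    ∃ φ : ℝ → ℝ, Hold α M φ ∧ AntitoneOn φ I01 ∧ ContinuousOn φ I01 ∧
      ∀ᵐ x ∂mu, f x = φ x := by
  obtain ⟨⟨χ, hχH, hχae⟩, ⟨ψ, hψA, hψae⟩⟩ := hf
  have hae : ∀ᵐ x ∂mu, χ x = ψ x := by
    filter_upwards [hχae, hψae] with x h1 h2
    rw [← h1, h2]
  exact ⟨χ, hχH, antitoneOn_of_ae_eq hα hχH hψA hae, contOn_of_holder hα hχH, hχae⟩

lemma norm_eq_of_sq_eq {a b : ℝ} (ha : 0 ≤ a) (hb : 0 ≤ b) (h : a^2 = b^2) : a = b := by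
  nlinarith [sq_nonneg (a - b), sq_nonneg (a + b)]

lemma modSet_swap {αA MA αB MB ε : ℝ} (hA : 0 < αA) (hB : 0 < αB) (T : H → ℝ)
    (hT : ∀ (f : H) (g : ℝ → ℝ), ContinuousOn g (Set.Icc (-(1:ℝ)/2) (1/2)) →
      (∀ᵐ x ∂(volume.restrict (Set.Icc (-(1:ℝ)/2) (1/2))), f x = g x) → T f = g 0) :
    modSet T (FD αA MA) (FD αB MB) ε ⊆ modSet T (FD αB MB) (FD αA MA) ε := by
  rintro d ⟨f, hf, g, hg, hnorm, rfl⟩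
  obtain ⟨φ, hφH, hφA, hφC, hφae⟩ := FD_elim hA hf
  obtain ⟨ψ, hψH, hψA, hψC, hψae⟩ := FD_elim hB hg
  set φ' : ℝ → ℝ := fun x => -φ (-x) with hφ'def
  set ψ' : ℝ → ℝ := fun x => -ψ (-x) with hψ'def
  have refl_hold : ∀ (a M : ℝ) (u : ℝ → ℝ), Hold a M u → Hold a M (fun x => -u (-x)) := by
    intro a M u hu x hx y hy
    have h := hu (-x) (neg_mem_I hx) (-y) (neg_mem_I hy)
    calc |(fun x => -u (-x)) x - (fun x => -u (-x)) y| = |u (-x) - u (-y)| := by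
          simp only []
          rw [show -u (-x) - -u (-y) = -(u (-x) - u (-y)) by ring, abs_neg]
      _ ≤ M * |(-x) - (-y)| ^ a := h
      _ = M * |x - y| ^ a := by rw [show (-x) - (-y) = -(x - y) by ring, abs_neg]
  have refl_anti : ∀ u : ℝ → ℝ, AntitoneOn u I01 → AntitoneOn (fun x => -u (-x)) I01 := by
    intro u hu x hx y hy hxy
    simp only [neg_le_neg_iff]
    exact hu (neg_mem_I hy) (neg_mem_I hx) (by linarith)
  have hφ'H : Hold αA MA φ' := refl_hold _ _ _ hφH
  have hψ'H : Hold αB MB ψ' := refl_hold _ _ _ hψH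
  have hφ'C : ContinuousOn φ' I01 := contOn_of_holder hA hφ'H
  have hψ'C : ContinuousOn ψ' I01 := contOn_of_holder hB hψ'H
  set g' : H := toH φ' hφ'C with hg'def
  set f' : H := toH ψ' hψ'C with hf'def
  have hg'FD : g' ∈ FD αA MA := ⟨⟨φ', hφ'H, toH_ae _ _⟩, ⟨φ', refl_anti _ hφA, toH_ae _ _⟩⟩
  have hf'FD : f' ∈ FD αB MB := ⟨⟨ψ', hψ'H, toH_ae _ _⟩, ⟨ψ', refl_anti _ hψA, toH_ae _ _⟩⟩
  have hnorm' : ‖g' - f'‖ = ‖g - f‖ := by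
    apply norm_eq_of_sq_eq (norm_nonneg _) (norm_nonneg _)
    rw [norm_sub_sq f' g' ψ' φ' (toH_ae _ _) (toH_ae _ _),
      norm_sub_sq f g φ ψ hφae hψae]
    have : ∀ x : ℝ, (φ' x - ψ' x)^2 = (fun y => (ψ y - φ y)^2) (-x) := by
      intro x
      simp only [hφ'def, hψ'def]
      ring
    rw [show (fun x => (φ' x - ψ' x)^2) = fun x => (fun y => (ψ y - φ y)^2) (-x) from
      funext this]
    simpa using integral_reflect fun y => (ψ y - φ y)^2
  have hTf : T f = φ 0 := hT f φ hφC hφae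
  have hTg : T g = ψ 0 := hT g ψ hψC hψae
  have hTf' : T f' = ψ' 0 := hT f' ψ' hψ'C (toH_ae _ _)
  have hTg' : T g' = φ' 0 := hT g' φ' hφ'C (toH_ae _ _)
  refine ⟨f', hf'FD, g', hg'FD, by rw [hnorm']; exact hnorm, ?_⟩
  rw [hTg', hTf', hTf, hTg, hφ'def, hψ'def]
  simp only [neg_zero]
  ring
lemma both_bounds {αa αb Ma Mb : ℝ} (hb : 0 < αb) (hba : αb ≤ αa) (ha1 : αa ≤ 1)
    (hMa : 0 < Ma) (hMb : 0 < Mb) (T : H → ℝ)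
    (hT : ∀ (f : H) (g : ℝ → ℝ), ContinuousOn g (Set.Icc (-(1:ℝ)/2) (1/2)) →
      (∀ᵐ x ∂(volume.restrict (Set.Icc (-(1:ℝ)/2) (1/2))), f x = g x) → T f = g 0) :
    ∃ c C ε₀ : ℝ, 0 < c ∧ c ≤ C ∧ 0 < ε₀ ∧ ∀ ε : ℝ, 0 < ε → ε ≤ ε₀ →
      c * ε ^ (2 * αa / (2 * αa + 1)) ≤ omegaMod T (FD αa Ma) (FD αb Mb) ε ∧
        omegaMod T (FD αa Ma) (FD αb Mb) ε ≤ C * ε ^ (2 * αa / (2 * αa + 1)) := by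
  have ha : 0 < αa := lt_of_lt_of_le hb hba
  obtain ⟨c₁, ε₁, hc₁, hε₁, hmem⟩ := key_lower hb hba ha1 hMa hMb T hT
  set C₁ : ℝ := max ((4 * (2*Ma)^(1/αa)) ^ (αa/(2*αa+1))) 3 with hC₁def
  have hC₁ : 0 < C₁ := lt_of_lt_of_le (by norm_num) (le_max_right _ _)
  set q : ℝ := 2 * αa / (2 * αa + 1) with hqdef
  have hq : 0 < q := by positivity
  have hq1 : q ≤ 1 := by
    rw [hqdef, div_le_one (by linarith)]
    linarith
  have hub : ∀ ε : ℝ, 0 < ε → ε ≤ 1 →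
      ∀ d ∈ modSet T (FD αa Ma) (FD αb Mb) ε, d ≤ C₁ * ε ^ q := by
    rintro ε hε hε1 d ⟨f, hf, g, hg, hnorm, rfl⟩
    obtain ⟨φ, hφH, _, hφC, hφae⟩ := FD_elim ha hf
    obtain ⟨ψ, _, hψA, hψC, hψae⟩ := FD_elim hb hg
    rw [hT g ψ hψC hψae, hT f φ hφC hφae]
    have hεqpos : (0:ℝ) < ε ^ q := Real.rpow_pos_of_pos hε _
    have hεq : ε ≤ ε ^ q := by
      calc ε = ε ^ (1:ℝ) := (Real.rpow_one ε).symm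
        _ ≤ ε ^ q := Real.rpow_le_rpow_of_exponent_ge hε hε1 hq1
    rcases key_upper ha ha1 hMa hε f g φ ψ hφH hφae hψA hψC hψae hnorm with h | h
    · exact h.trans (mul_le_mul_of_nonneg_right (le_max_left _ _) hεqpos.le)
    · calc ψ 0 - φ 0 ≤ 3 * ε := h
        _ ≤ 3 * ε ^ q := by linarith
        _ ≤ C₁ * ε ^ q := mul_le_mul_of_nonneg_right (le_max_right _ _) hεqpos.le
  refine ⟨min c₁ C₁, max c₁ C₁, min ε₁ 1, lt_min hc₁ hC₁,
    (min_le_left _ _).trans (le_max_left _ _), lt_min hε₁ one_pos, ?_⟩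
  intro ε hε hεle
  have hε1 : ε ≤ 1 := hεle.trans (min_le_right _ _)
  have hεε₁ : ε ≤ ε₁ := hεle.trans (min_le_left _ _)
  have hmem' := hmem ε hε hεε₁
  have hεqpos : (0:ℝ) < ε ^ q := Real.rpow_pos_of_pos hε _
  have hbdd : BddAbove (modSet T (FD αa Ma) (FD αb Mb) ε) :=
    ⟨C₁ * ε ^ q, fun d hd => hub ε hε hε1 d hd⟩
  constructor
  · calc min c₁ C₁ * ε ^ q ≤ c₁ * ε ^ q :=
        mul_le_mul_of_nonneg_right (min_le_left _ _) hεqpos.le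
      _ ≤ omegaMod T (FD αa Ma) (FD αb Mb) ε := le_csSup hbdd hmem'
  · calc omegaMod T (FD αa Ma) (FD αb Mb) ε ≤ C₁ * ε ^ q :=
        csSup_le ⟨_, hmem'⟩ (fun d hd => hub ε hε hε1 d hd)
      _ ≤ max c₁ C₁ * ε ^ q :=
        mul_le_mul_of_nonneg_right (le_max_right _ _) hεqpos.le

end Ex1

/-- Example 1: for `T f = f(0)`, `F₁ = F_D(α₁, M₁)` and `F₂ = F_D(α₂, M₂)` with
`0 < α₂ < α₁ ≤ 1`: (i) `ω(ε, F₁, F₂) = ω(ε, F₂, F₁)`; (ii) both are `≍ ε^{2α₁/(2α₁+1)}`;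
(iii) `ω(ε, F_i) ≍ ε^{2α_i/(2α_i+1)}` for `i = 1, 2`. -/
theorem example1_decreasing_holder_moduli
    (α₁ α₂ M₁ M₂ : ℝ) (hα₂ : 0 < α₂) (hαlt : α₂ < α₁) (hα₁ : α₁ ≤ 1)
    (hM₁ : 0 < M₁) (hM₂ : 0 < M₂)
    (T : H → ℝ)
    (hT : ∀ (f : H) (g : ℝ → ℝ), ContinuousOn g (Set.Icc (-(1:ℝ)/2) (1/2)) →
      (∀ᵐ x ∂(volume.restrict (Set.Icc (-(1:ℝ)/2) (1/2))), f x = g x) → T f = g 0) :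
    (∀ ε : ℝ, 0 < ε →
      omegaMod T (FD α₁ M₁) (FD α₂ M₂) ε = omegaMod T (FD α₂ M₂) (FD α₁ M₁) ε) ∧
    (∃ c C ε₀ : ℝ, 0 < c ∧ c ≤ C ∧ 0 < ε₀ ∧ ∀ ε : ℝ, 0 < ε → ε ≤ ε₀ →
      c * ε ^ (2 * α₁ / (2 * α₁ + 1)) ≤ omegaMod T (FD α₁ M₁) (FD α₂ M₂) ε ∧
        omegaMod T (FD α₁ M₁) (FD α₂ M₂) ε ≤ C * ε ^ (2 * α₁ / (2 * α₁ + 1))) ∧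
    (∃ c C ε₀ : ℝ, 0 < c ∧ c ≤ C ∧ 0 < ε₀ ∧ ∀ ε : ℝ, 0 < ε → ε ≤ ε₀ →
      c * ε ^ (2 * α₁ / (2 * α₁ + 1)) ≤ omegaMod T (FD α₁ M₁) (FD α₁ M₁) ε ∧
        omegaMod T (FD α₁ M₁) (FD α₁ M₁) ε ≤ C * ε ^ (2 * α₁ / (2 * α₁ + 1))) ∧
    (∃ c C ε₀ : ℝ, 0 < c ∧ c ≤ C ∧ 0 < ε₀ ∧ ∀ ε : ℝ, 0 < ε → ε ≤ ε₀ →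
      c * ε ^ (2 * α₂ / (2 * α₂ + 1)) ≤ omegaMod T (FD α₂ M₂) (FD α₂ M₂) ε ∧
        omegaMod T (FD α₂ M₂) (FD α₂ M₂) ε ≤ C * ε ^ (2 * α₂ / (2 * α₂ + 1))) := by
  have hα₁pos : 0 < α₁ := lt_trans hα₂ hαlt
  refine ⟨?_, ?_, ?_, ?_⟩
  · intro ε hε
    unfold omegaMod
    congr 1
    exact Set.Subset.antisymm (Ex1.modSet_swap hα₁pos hα₂ T hT)
      (Ex1.modSet_swap hα₂ hα₁pos T hT)
  · exact Ex1.both_bounds hα₂ hαlt.le hα₁ hM₁ hM₂ T hT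
  · exact Ex1.both_bounds hα₁pos le_rfl hα₁ hM₁ hM₁ T hT
  · exact Ex1.both_bounds hα₂ le_rfl (le_trans hαlt.le hα₁) hM₂ hM₂ T hT
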